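/- arXiv:1512.07526 — 5 statements merged into one kernel-verified Lean document; each statement's English description precedes it below -/
import Mathlib

section
/- Let X be a geodesic metric space and Λ a subset of X such that every metric ball of X disjoint from Λ has closest-point projection on Λ of diameter at most C. Then for any two points x, y of X and any closest-point projections π(x), π(y) of x, y on Λ, one has d(π(x), π(y)) ≤ max(C, 4·d(x,y)). -/
/-- A metric space is geodesic if any two points are joined by an isometric
parametrization of an interval. -/
def IsGeodesicMetricSpace (X : Type*) [MetricSpace X] : Prop :=
  ∀ x y : X, ∃ γ : ℝ → X, γ 0 = x ∧ γ (dist x y) = y ∧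
    ∀ s ∈ Set.Icc (0 : ℝ) (dist x y), ∀ t ∈ Set.Icc (0 : ℝ) (dist x y),
      dist (γ s) (γ t) = |s - t|

/-- If every ball disjoint from `Λ` projects on `Λ` to a set of diameter at most `C`,
then closest-point projections are coarsely Lipschitz:
`d(π(x), π(y)) ≤ max (C, 4 d(x,y))`. -/
theorem coarsely_lipschitz_projection {X : Type*} [MetricSpace X]
    (hX : IsGeodesicMetricSpace X)
    (Λ : Set X) (hclosed : IsClosed Λ) (hne : Λ.Nonempty)
    (hproj : ∀ z : X, ∃ p ∈ Λ, dist z p = Metric.infDist z Λ)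
    (C : ℝ) (hC : 0 ≤ C)
    (hcontr : ∀ (c : X) (r : ℝ), Metric.closedBall c r ∩ Λ = ∅ →
      Metric.diam {p : X | ∃ z ∈ Metric.closedBall c r,
        p ∈ Λ ∧ dist z p = Metric.infDist z Λ} ≤ C)
    (x y πx πy : X)
    (hπx : πx ∈ Λ ∧ dist x πx = Metric.infDist x Λ)
    (hπy : πy ∈ Λ ∧ dist y πy = Metric.infDist y Λ) :
    dist πx πy ≤ max C (4 * dist x y) := by
  obtain ⟨hπxΛ, hπxd⟩ := hπx
  obtain ⟨hπyΛ, hπyd⟩ := hπy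
  set d := dist x y with hd
  have hd0 : 0 ≤ d := dist_nonneg
  by_cases hcase : Metric.infDist x Λ ≤ d ∨ Metric.infDist y Λ ≤ d
  · -- easy case: one projection distance is at most d
    have hxy : Metric.infDist x Λ ≤ Metric.infDist y Λ + d := by
      have := Metric.infDist_le_infDist_add_dist (x := x) (y := y) (s := Λ)
      simpa [dist_comm] using this
    have hyx : Metric.infDist y Λ ≤ Metric.infDist x Λ + d := by
      have := Metric.infDist_le_infDist_add_dist (x := y) (y := x) (s := Λ)
      simpa [dist_comm, hd] using this
    have htri : dist πx πy ≤ dist πx x + dist x y + dist y πy := dist_triangle4 πx x y πy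
    have hxpx : dist πx x = Metric.infDist x Λ := by rw [dist_comm]; exact hπxd
    have h4 : dist πx πy ≤ 4 * d := by
      rcases hcase with h | h <;> linarith [hπyd]
    exact le_trans h4 (le_max_right _ _)
  · push_neg at hcase
    obtain ⟨ha, hb⟩ := hcase
    obtain ⟨γ, hγ0, hγd, hiso⟩ := hX x y
    set m := γ (d / 2) with hm
    have hmem : d / 2 ∈ Set.Icc (0 : ℝ) d := ⟨by linarith, by linarith⟩
    have hmx : dist m x = d / 2 := by
      have := hiso (d / 2) hmem 0 ⟨le_refl _, hd0⟩
      rw [hγ0] at this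
      rw [this]; rw [abs_of_nonneg (by linarith)]; ring
    have hmy : dist m y = d / 2 := by
      have := hiso (d / 2) hmem d ⟨hd0, le_refl _⟩
      rw [hγd] at this
      rw [this]; rw [abs_of_nonpos (by linarith)]; ring
    have hinfm : d / 2 < Metric.infDist m Λ := by
      have h1 := Metric.infDist_le_infDist_add_dist (x := x) (y := m) (s := Λ)
      have h2 : dist x m = d / 2 := by rw [dist_comm]; exact hmx
      linarith
    have hdisj : Metric.closedBall m (d / 2) ∩ Λ = ∅ := by
      ext p
      simp only [Set.mem_inter_iff, Metric.mem_closedBall, Set.mem_empty_iff_false,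
        iff_false, not_and]
      intro hp hpΛ
      have h1 : Metric.infDist m Λ ≤ dist m p := Metric.infDist_le_dist_of_mem hpΛ
      rw [dist_comm] at h1
      linarith
    set S := {p : X | ∃ z ∈ Metric.closedBall m (d / 2),
      p ∈ Λ ∧ dist z p = Metric.infDist z Λ} with hS
    have hSsub : S ⊆ Metric.closedBall m (Metric.infDist m Λ + d) := by
      rintro p ⟨z, hz, hpΛ, hzp⟩
      rw [Metric.mem_closedBall] at hz ⊢
      have h1 : dist m p ≤ dist m z + dist z p := dist_triangle m z p
      have h2 : Metric.infDist z Λ ≤ Metric.infDist m Λ + dist z m :=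
        Metric.infDist_le_infDist_add_dist
      have h3 : dist z m = dist m z := dist_comm z m
      have h4 : dist p m = dist m p := dist_comm p m
      linarith
    have hSb : Bornology.IsBounded S :=
      Metric.isBounded_closedBall.subset hSsub
    have hπxS : πx ∈ S := ⟨x, by rw [Metric.mem_closedBall, dist_comm, hmx], hπxΛ, hπxd⟩
    have hπyS : πy ∈ S := ⟨y, by rw [Metric.mem_closedBall, dist_comm, hmy], hπyΛ, hπyd⟩
    have h1 : dist πx πy ≤ Metric.diam S := Metric.dist_le_diam_of_mem hSb hπxS hπyS
    have h2 : Metric.diam S ≤ C := hcontr m (d / 2) hdisj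
    exact le_trans (le_trans h1 h2) (le_max_left _ _)
end

section
/- In a geodesic metric space X, any strongly contracting quasi-geodesic Λ is Morse: for every K ≥ 1, L ≥ 0 there exists C(K,L) such that every (K,L)-quasi-geodesic with endpoints on Λ stays in the C(K,L)-neighbourhood of Λ. -/
lemma proj_close {X : Type*} [MetricSpace X] (Λ : Set X) (C : ℝ)
    (hcontr : ∀ (c : X) (r : ℝ), Metric.closedBall c r ∩ Λ = ∅ →
      Metric.diam {p : X | ∃ z ∈ Metric.closedBall c r,
        p ∈ Λ ∧ dist z p = Metric.infDist z Λ} ≤ C)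
    (p : X → X) (hpΛ : ∀ z, p z ∈ Λ) (hpd : ∀ z, dist z (p z) = Metric.infDist z Λ)
    (z z' : X) (r : ℝ) (hr : 0 ≤ r) (hz : r < Metric.infDist z Λ)
    (hz' : dist z z' ≤ r) : dist (p z) (p z') ≤ C := by
  have hball : Metric.closedBall z r ∩ Λ = ∅ := by
    ext w
    simp only [Set.mem_inter_iff, Metric.mem_closedBall, Set.mem_empty_iff_false, iff_false,
      not_and]
    intro hw hwΛ
    exact absurd (Metric.infDist_le_dist_of_mem hwΛ) (by rw [dist_comm] at hw; linarith)
  set P := {p' : X | ∃ z'' ∈ Metric.closedBall z r, p' ∈ Λ ∧ dist z'' p' = Metric.infDist z'' Λ}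
  have hPz : p z ∈ P := ⟨z, by simp [hr], hpΛ z, hpd z⟩
  have hPz' : p z' ∈ P := ⟨z', by rw [Metric.mem_closedBall, dist_comm]; exact hz', hpΛ z', hpd z'⟩
  have hbdd : Bornology.IsBounded P := by
    apply (Metric.isBounded_closedBall (x := z) (r := Metric.infDist z Λ + 2*r)).subset
    rintro p' ⟨z'', hz'', hp'Λ, hp'd⟩
    rw [Metric.mem_closedBall] at hz'' ⊢
    have h1 : dist p' z ≤ dist p' z'' + dist z'' z := dist_triangle _ _ _
    have h3 : Metric.infDist z'' Λ ≤ Metric.infDist z Λ + dist z'' z :=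
      Metric.infDist_le_infDist_add_dist
    have e1 : dist z p' = dist p' z := dist_comm _ _
    have e2 : dist p' z'' = dist z'' p' := dist_comm _ _
    linarith [hp'd, hz'']
  calc dist (p z) (p z') ≤ Metric.diam P := Metric.dist_le_diam_of_mem hbdd hPz hPz'
    _ ≤ C := hcontr z r hball

lemma chain_lemma {X : Type*} [MetricSpace X] (Λ : Set X) (C : ℝ) (hC : 0 ≤ C)
    (hcontr : ∀ (c : X) (r : ℝ), Metric.closedBall c r ∩ Λ = ∅ →
      Metric.diam {p : X | ∃ z ∈ Metric.closedBall c r,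
        p ∈ Λ ∧ dist z p = Metric.infDist z Λ} ≤ C)
    (p : X → X) (hpΛ : ∀ z, p z ∈ Λ) (hpd : ∀ z, dist z (p z) = Metric.infDist z Λ)
    (q : ℝ → X) (K L : ℝ) (hK : 1 ≤ K) (hL : 0 ≤ L) (a b : ℝ)
    (hqu : ∀ s ∈ Set.Icc a b, ∀ t ∈ Set.Icc a b, dist (q s) (q t) ≤ K * |s - t| + L)
    (R : ℝ) (hR : L < R) (t₁ : ℝ) (ht₁ : a ≤ t₁) (n : ℕ) :
    ∀ t₂, t₁ ≤ t₂ → t₂ ≤ b →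
      (∀ t ∈ Set.Icc t₁ t₂, R < Metric.infDist (q t) Λ) →
      t₂ - t₁ ≤ n * ((R - L)/K) →
      dist (p (q t₁)) (p (q t₂)) ≤ C * n := by
  have hK0 : (0:ℝ) < K := by linarith
  have hδ : 0 < (R - L)/K := div_pos (by linarith) hK0
  induction n with
  | zero =>
    intro t₂ h12 hb hfar hn
    have : t₂ = t₁ := by push_cast at hn; linarith
    simp [this]
  | succ n ih =>
    intro t₂ h12 hb hfar hn
    by_cases hcase : t₂ - t₁ ≤ n * ((R - L)/K)
    · have := ih t₂ h12 hb hfar hcase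
      have : C * n ≤ C * (n+1) := by
        apply mul_le_mul_of_nonneg_left _ hC
        push_cast; linarith
      push_cast
      linarith [ih t₂ h12 hb hfar hcase]
    · set δ := (R - L)/K with hδdef
      set u := max t₁ (t₂ - δ) with hudef
      have hu1 : t₁ ≤ u := le_max_left _ _
      have hu2 : u ≤ t₂ := max_le h12 (by linarith)
      have hun : u - t₁ ≤ n * δ := by
        have h1 : t₂ - δ ≤ t₁ + n * δ := by push_cast at hn; linarith
        have : u ≤ t₁ + n * δ := max_le (le_add_of_nonneg_right (mul_nonneg (Nat.cast_nonneg n) hδ.le)) h1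
        linarith
      have hIH : dist (p (q t₁)) (p (q u)) ≤ C * n :=
        ih u hu1 (le_trans hu2 hb) (fun t ht => hfar t ⟨ht.1, le_trans ht.2 hu2⟩) hun
      have hqdist : dist (q u) (q t₂) ≤ R := by
        have h1 : dist (q u) (q t₂) ≤ K * |u - t₂| + L :=
          hqu u ⟨le_trans ht₁ hu1, le_trans hu2 hb⟩ t₂ ⟨le_trans ht₁ h12, hb⟩
        have h2 : |u - t₂| ≤ δ := by
          rw [abs_le]
          constructor <;> [skip; linarith]
          have : t₂ - δ ≤ u := le_max_right _ _
          linarith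
        have h3 : K * |u - t₂| ≤ K * δ := mul_le_mul_of_nonneg_left h2 (le_of_lt hK0)
        have h4 : K * δ = R - L := by rw [hδdef]; field_simp
        linarith
      have hstep : dist (p (q u)) (p (q t₂)) ≤ C :=
        proj_close Λ C hcontr p hpΛ hpd (q u) (q t₂) R (by linarith)
          (hfar u ⟨hu1, hu2⟩) hqdist
      calc dist (p (q t₁)) (p (q t₂)) ≤ dist (p (q t₁)) (p (q u)) + dist (p (q u)) (p (q t₂)) :=
            dist_triangle _ _ _
        _ ≤ C * n + C := add_le_add hIH hstep
        _ = C * (n+1) := by ring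
        _ = C * ((n:ℕ)+1 : ℕ) := by push_cast; ring


set_option maxHeartbeats 1000000 in
/-- A strongly contracting quasi-geodesic is Morse: for all `K ≥ 1`, `L ≥ 0`
there is `C'` such that every `(K,L)`-quasi-geodesic with endpoints on `Λ`
stays in the `C'`-neighbourhood of `Λ`. -/
theorem strongly_contracting_implies_Morse {X : Type*} [MetricSpace X]
    (hgeo : IsGeodesicMetricSpace X)
    (Λ : Set X)
    -- `Λ` is the image of a quasi-isometric embedding of an interval of `ℝ`
    (hΛ : ∃ (K₀ L₀ : ℝ) (I : Set ℝ) (c : ℝ → X), 1 ≤ K₀ ∧ 0 ≤ L₀ ∧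
      I.OrdConnected ∧ Λ = c '' I ∧
      ∀ s ∈ I, ∀ t ∈ I,
        (1 / K₀) * |s - t| - L₀ ≤ dist (c s) (c t) ∧
        dist (c s) (c t) ≤ K₀ * |s - t| + L₀)
    (hproj : ∀ z : X, ∃ p ∈ Λ, dist z p = Metric.infDist z Λ)
    -- strong contraction: balls disjoint from `Λ` project to sets of diameter `≤ C`
    (C : ℝ) (hC : 0 ≤ C)
    (hcontr : ∀ (c : X) (r : ℝ), Metric.closedBall c r ∩ Λ = ∅ →
      Metric.diam {p : X | ∃ z ∈ Metric.closedBall c r,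
        p ∈ Λ ∧ dist z p = Metric.infDist z Λ} ≤ C) :
    ∀ K : ℝ, 1 ≤ K → ∀ L : ℝ, 0 ≤ L → ∃ C' : ℝ,
      ∀ (q : ℝ → X) (a b : ℝ), a ≤ b → q a ∈ Λ → q b ∈ Λ →
        (∀ s ∈ Set.Icc a b, ∀ t ∈ Set.Icc a b,
          (1 / K) * |s - t| - L ≤ dist (q s) (q t) ∧
          dist (q s) (q t) ≤ K * |s - t| + L) →
        ∀ s ∈ Set.Icc a b, Metric.infDist (q s) Λ ≤ C' := by
  intro K hK L hL
  choose p hpΛ hpd using hproj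
  have hK0 : (0:ℝ) < K := by linarith
  set R : ℝ := L + 2*C*K^2 + 1 with hRdef
  have hR0 : 0 < R := by nlinarith
  refine ⟨2*R + 2*K + 3*L + 2*K^2*(4*R+4*K+5*L+C), ?_⟩
  intro q a b hab hqa hqb hq s hs
  have hqu : ∀ u ∈ Set.Icc a b, ∀ v ∈ Set.Icc a b, dist (q u) (q v) ≤ K * |u - v| + L :=
    fun u hu v hv => (hq u hu v hv).2
  by_cases hnear : Metric.infDist (q s) Λ ≤ 2*R
  · nlinarith [Metric.infDist_nonneg (x := q s) (s := Λ)]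
  push_neg at hnear
  -- the excursion interval
  set S₁ : Set ℝ := {t | t ∈ Set.Icc a s ∧ Metric.infDist (q t) Λ ≤ 2*R} with hS₁def
  have haS₁ : a ∈ S₁ := ⟨⟨le_refl a, hs.1⟩, by rw [Metric.infDist_zero_of_mem hqa]; linarith⟩
  have hS₁ne : S₁.Nonempty := ⟨a, haS₁⟩
  have hS₁bdd : BddAbove S₁ := ⟨s, fun t ht => ht.1.2⟩
  set t₁ : ℝ := sSup S₁ with ht₁def
  have ht₁a : a ≤ t₁ := le_csSup hS₁bdd haS₁
  have ht₁s : t₁ ≤ s := csSup_le hS₁ne (fun t ht => ht.1.2)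
  have hfar₁ : ∀ t, t₁ < t → t ≤ s → 2*R < Metric.infDist (q t) Λ := by
    intro t h1 h2
    by_contra hcon
    push_neg at hcon
    exact absurd (le_csSup hS₁bdd ⟨⟨le_trans ht₁a h1.le, h2⟩, hcon⟩) (not_le.mpr h1)
  have ht₁d : Metric.infDist (q t₁) Λ ≤ 2*R + K + L := by
    obtain ⟨t, htS, htlt⟩ := exists_lt_of_lt_csSup hS₁ne (by linarith : t₁ - 1 < t₁)
    have htle : t ≤ t₁ := le_csSup hS₁bdd htS
    have h1 : Metric.infDist (q t₁) Λ ≤ Metric.infDist (q t) Λ + dist (q t₁) (q t) :=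
      Metric.infDist_le_infDist_add_dist
    have h2 : dist (q t₁) (q t) ≤ K * |t₁ - t| + L :=
      hqu t₁ ⟨ht₁a, le_trans ht₁s hs.2⟩ t ⟨htS.1.1, le_trans htS.1.2 hs.2⟩
    have h3 : |t₁ - t| ≤ 1 := by rw [abs_le]; constructor <;> linarith
    nlinarith [htS.2]
  set S₂ : Set ℝ := {t | t ∈ Set.Icc s b ∧ Metric.infDist (q t) Λ ≤ 2*R} with hS₂def
  have hbS₂ : b ∈ S₂ := ⟨⟨hs.2, le_refl b⟩, by rw [Metric.infDist_zero_of_mem hqb]; linarith⟩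
  have hS₂ne : S₂.Nonempty := ⟨b, hbS₂⟩
  have hS₂bdd : BddBelow S₂ := ⟨s, fun t ht => ht.1.1⟩
  set t₂ : ℝ := sInf S₂ with ht₂def
  have ht₂b : t₂ ≤ b := csInf_le hS₂bdd hbS₂
  have ht₂s : s ≤ t₂ := le_csInf hS₂ne (fun t ht => ht.1.1)
  have hfar₂ : ∀ t, s ≤ t → t < t₂ → 2*R < Metric.infDist (q t) Λ := by
    intro t h1 h2
    by_contra hcon
    push_neg at hcon
    exact absurd (csInf_le hS₂bdd ⟨⟨h1, le_trans h2.le ht₂b⟩, hcon⟩) (not_le.mpr h2)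
  have ht₂d : Metric.infDist (q t₂) Λ ≤ 2*R + K + L := by
    obtain ⟨t, htS, htlt⟩ := exists_lt_of_csInf_lt hS₂ne (by linarith : t₂ < t₂ + 1)
    have htle : t₂ ≤ t := csInf_le hS₂bdd htS
    have h1 : Metric.infDist (q t₂) Λ ≤ Metric.infDist (q t) Λ + dist (q t₂) (q t) :=
      Metric.infDist_le_infDist_add_dist
    have h2 : dist (q t₂) (q t) ≤ K * |t₂ - t| + L :=
      hqu t₂ ⟨le_trans hs.1 ht₂s, ht₂b⟩ t ⟨le_trans hs.1 htS.1.1, htS.1.2⟩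
    have h3 : |t₂ - t| ≤ 1 := by rw [abs_le]; constructor <;> linarith
    nlinarith [htS.2]
  -- inner interval
  set t₁' : ℝ := min s (t₁ + 1) with ht₁'def
  set t₂' : ℝ := max s (t₂ - 1) with ht₂'def
  have h1l : t₁ ≤ t₁' := le_min ht₁s (by linarith)
  have h1r : t₁' ≤ t₁ + 1 := min_le_right _ _
  have h1s : t₁' ≤ s := min_le_left _ _
  have h2l : t₂ - 1 ≤ t₂' := le_max_right _ _
  have h2r : t₂' ≤ t₂ := max_le ht₂s (by linarith)
  have h2s : s ≤ t₂' := le_max_left _ _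
  have h12' : t₁' ≤ t₂' := le_trans h1s h2s
  have ht₁'ab : t₁' ∈ Set.Icc a b := ⟨le_trans ht₁a h1l, le_trans h1s hs.2⟩
  have ht₂'ab : t₂' ∈ Set.Icc a b := ⟨le_trans hs.1 h2s, le_trans h2r ht₂b⟩
  have hfar' : ∀ t ∈ Set.Icc t₁' t₂', 2*R < Metric.infDist (q t) Λ := by
    rintro t ⟨htl, htr⟩
    rcases le_total t s with h | h
    · rcases le_or_gt s (t₁ + 1) with h' | h'
      · have : s ≤ t := by
          calc s = t₁' := (min_eq_left h').symm
            _ ≤ t := htl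
        have : t = s := le_antisymm h this
        rw [this]; exact hnear
      · have : t₁ + 1 ≤ t := by
          calc t₁ + 1 = t₁' := (min_eq_right h'.le).symm
            _ ≤ t := htl
        exact hfar₁ t (by linarith) h
    · rcases le_or_gt (t₂ - 1) s with h' | h'
      · have : t ≤ s := by
          calc t ≤ t₂' := htr
            _ = s := max_eq_left h'
        have : t = s := le_antisymm this h
        rw [this]; exact hnear
      · have : t ≤ t₂ - 1 := by
          calc t ≤ t₂' := htr
            _ = t₂ - 1 := max_eq_right h'.le
        exact hfar₂ t h (by linarith)
  have hd₁ : Metric.infDist (q t₁') Λ ≤ 2*R + 2*K + 2*L := by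
    have h1 : Metric.infDist (q t₁') Λ ≤ Metric.infDist (q t₁) Λ + dist (q t₁') (q t₁) :=
      Metric.infDist_le_infDist_add_dist
    have h2 : dist (q t₁') (q t₁) ≤ K * |t₁' - t₁| + L :=
      hqu t₁' ht₁'ab t₁ ⟨ht₁a, le_trans ht₁s hs.2⟩
    have h3 : |t₁' - t₁| ≤ 1 := by rw [abs_le]; constructor <;> linarith
    nlinarith
  have hd₂ : Metric.infDist (q t₂') Λ ≤ 2*R + 2*K + 2*L := by
    have h1 : Metric.infDist (q t₂') Λ ≤ Metric.infDist (q t₂) Λ + dist (q t₂') (q t₂) :=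
      Metric.infDist_le_infDist_add_dist
    have h2 : dist (q t₂') (q t₂) ≤ K * |t₂' - t₂| + L :=
      hqu t₂' ht₂'ab t₂ ⟨le_trans hs.1 ht₂s, ht₂b⟩
    have h3 : |t₂' - t₂| ≤ 1 := by rw [abs_le]; constructor <;> linarith
    nlinarith
  -- chaining
  set T : ℝ := t₂' - t₁' with hTdef
  have hT0 : 0 ≤ T := by linarith
  have hR2L : L < 2*R := by nlinarith
  set δ : ℝ := (2*R - L)/K with hδdef
  have hδ0 : 0 < δ := div_pos (by linarith) hK0
  set n : ℕ := ⌈T/δ⌉₊ with hndef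
  have hTn : T ≤ n * δ := by
    have := Nat.le_ceil (T/δ)
    calc T = (T/δ) * δ := by field_simp
      _ ≤ n * δ := mul_le_mul_of_nonneg_right this hδ0.le
  have hnT : (n:ℝ) ≤ T/δ + 1 := by
    have : (n:ℝ) < T/δ + 1 := Nat.ceil_lt_add_one (by positivity)
    linarith
  have hchain : dist (p (q t₁')) (p (q t₂')) ≤ C * n :=
    chain_lemma Λ C hC hcontr p hpΛ hpd q K L hK hL a b hqu (2*R) hR2L t₁' ht₁'ab.1
      n t₂' h12' ht₂'ab.2 hfar' hTn
  have hCn : C * n ≤ C * (T/δ) + C := by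
    have := mul_le_mul_of_nonneg_left hnT hC
    linarith
  have hCδ : C * (T/δ) ≤ T/(2*K) := by
    have h1 : C/δ ≤ 1/(2*K) := by
      rw [hδdef, div_div_eq_mul_div]
      rw [div_le_div_iff₀ (by linarith) (by linarith)]
      nlinarith
    calc C * (T/δ) = (C/δ) * T := by ring
      _ ≤ (1/(2*K)) * T := mul_le_mul_of_nonneg_right h1 hT0
      _ = T/(2*K) := by ring
  -- lower quasi-geodesic bound
  have hlow : (1/K) * T - L ≤ dist (q t₁') (q t₂') := by
    have := (hq t₁' ht₁'ab t₂' ht₂'ab).1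
    have habs : |t₁' - t₂'| = T := by rw [abs_sub_comm, abs_of_nonneg (by linarith)]
    rw [habs] at this
    exact this
  have hup : dist (q t₁') (q t₂') ≤ (2*R + 2*K + 2*L) + (C * n) + (2*R + 2*K + 2*L) := by
    calc dist (q t₁') (q t₂')
        ≤ dist (q t₁') (p (q t₁')) + dist (p (q t₁')) (p (q t₂')) + dist (p (q t₂')) (q t₂') :=
          dist_triangle4 _ _ _ _
      _ ≤ (2*R + 2*K + 2*L) + (C * n) + (2*R + 2*K + 2*L) := by
          have e1 : dist (q t₁') (p (q t₁')) = Metric.infDist (q t₁') Λ := hpd _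
          have e2 : dist (p (q t₂')) (q t₂') = Metric.infDist (q t₂') Λ := by
            rw [dist_comm]; exact hpd _
          rw [e1, e2]
          exact add_le_add (add_le_add hd₁ hchain) hd₂
  -- combine: T/(2K) ≤ 4R+4K+5L+C
  have hTbound : T ≤ 2*K*(4*R + 4*K + 5*L + C) := by
    have key : (1/K) * T - L ≤ 4*R + 4*K + 4*L + T/(2*K) + C := by
      calc (1/K) * T - L ≤ dist (q t₁') (q t₂') := hlow
        _ ≤ (2*R + 2*K + 2*L) + (C * n) + (2*R + 2*K + 2*L) := hup
        _ ≤ 4*R + 4*K + 4*L + T/(2*K) + C := by linarith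
    have h2K : (0:ℝ) < 2*K := by linarith
    have : (1/K) * T - T/(2*K) = T/(2*K) := by field_simp; ring
    have h3 : T/(2*K) ≤ 4*R + 4*K + 5*L + C := by linarith
    calc T = (T/(2*K)) * (2*K) := by field_simp
      _ ≤ (4*R + 4*K + 5*L + C) * (2*K) := mul_le_mul_of_nonneg_right h3 h2K.le
      _ = 2*K*(4*R + 4*K + 5*L + C) := by ring
  -- final bound on infDist (q s)
  have hfinal : Metric.infDist (q s) Λ ≤ Metric.infDist (q t₁') Λ + dist (q s) (q t₁') :=
    Metric.infDist_le_infDist_add_dist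
  have hds : dist (q s) (q t₁') ≤ K * T + L := by
    have h1 := hqu s hs t₁' ht₁'ab
    have habs : |s - t₁'| ≤ T := by
      rw [abs_of_nonneg (by linarith)]; linarith
    nlinarith
  have hKT : K * T ≤ K * (2*K*(4*R + 4*K + 5*L + C)) :=
    mul_le_mul_of_nonneg_left hTbound hK0.le
  nlinarith
end

section
/- Let G be a group acting by isometries on a geodesic metric space X, and let g ∈ G be a Morse element (infinite order, quasi-isometrically embedded orbits, with Morse orbits). If for every r ≥ 0 and every x ∈ X there exists m₀ such that only finitely many h ∈ G satisfy d(x,hx) ≤ r and d(g^{m₀}x, h g^{m₀}x) ≤ r, then for every r ≥ 0 and x ∈ X there exists m₀ such that for ALL m ≥ m₀, only finitely many h ∈ G satisfy d(x,hx) ≤ r and d(g^{m}x, h g^{m}x) ≤ r. -/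
set_option maxHeartbeats 1000000 in
/-- For a Morse element `g` (infinite order, quasi-isometrically embedded orbits,
Morse orbits) of a group acting by isometries on a geodesic metric space,
the WPD condition at a single exponent implies the uniform WPD condition
for all sufficiently large exponents. -/
theorem wpd_single_implies_uniform {G X : Type*} [Group G] [MetricSpace X]
    [MulAction G X]
    (hiso : ∀ (k : G) (p q : X), dist (k • p) (k • q) = dist p q)
    (hgeo : ∀ x y : X, ∃ γ : ℝ → X, γ 0 = x ∧ γ (dist x y) = y ∧
      ∀ s ∈ Set.Icc (0 : ℝ) (dist x y), ∀ t ∈ Set.Icc (0 : ℝ) (dist x y),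
        dist (γ s) (γ t) = |s - t|)
    (g : G)
    -- infinite order
    (hord : ∀ n : ℤ, n ≠ 0 → g ^ n ≠ 1)
    -- quasi-isometrically embedded orbits
    (hqi : ∀ x : X, ∃ K L : ℝ, 1 ≤ K ∧ 0 ≤ L ∧ ∀ m n : ℤ,
      (1 / K) * |(m : ℝ) - n| - L ≤ dist (g ^ m • x) (g ^ n • x) ∧
      dist (g ^ m • x) (g ^ n • x) ≤ K * |(m : ℝ) - n| + L)
    -- Morse orbits
    (hMorse : ∀ x : X, ∀ K : ℝ, 1 ≤ K → ∀ L : ℝ, 0 ≤ L → ∃ C : ℝ,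
      ∀ (q : ℝ → X) (a b : ℝ), a ≤ b →
        (∃ m : ℤ, q a = g ^ m • x) → (∃ m : ℤ, q b = g ^ m • x) →
        (∀ s ∈ Set.Icc a b, ∀ t ∈ Set.Icc a b,
          (1 / K) * |s - t| - L ≤ dist (q s) (q t) ∧
          dist (q s) (q t) ≤ K * |s - t| + L) →
        ∀ s ∈ Set.Icc a b,
          Metric.infDist (q s) (Set.range fun m : ℤ => g ^ m • x) ≤ C)
    -- WPD at a single exponent
    (hWPD : ∀ r : ℝ, 0 ≤ r → ∀ x : X, ∃ m₀ : ℕ,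
      {h : G | dist x (h • x) ≤ r ∧
        dist (g ^ m₀ • x) (h • (g ^ m₀ • x)) ≤ r}.Finite) :
    -- uniform WPD for all large exponents
    ∀ r : ℝ, 0 ≤ r → ∀ x : X, ∃ m₀ : ℕ, ∀ m : ℕ, m₀ ≤ m →
      {h : G | dist x (h • x) ≤ r ∧
        dist (g ^ m • x) (h • (g ^ m • x)) ≤ r}.Finite := by
  intro r hr x
  obtain ⟨K, L, hK, hL, hQI⟩ := hqi x
  have hK0 : (0:ℝ) < K := lt_of_lt_of_le one_pos hK
  obtain ⟨C₀, hC₀⟩ := hMorse x K hK (L + 2*K + 2*r + 2) (by nlinarith)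
  set C : ℝ := max C₀ 0 with hCdef
  have hC0 : (0:ℝ) ≤ C := le_max_right _ _
  have hC₀C : C₀ ≤ C := le_max_left _ _
  set ρ : ℝ := C + r + 1 with hρdef
  have hρ0 : (0:ℝ) < ρ := by simp only [hρdef]; linarith
  obtain ⟨m₀, hU⟩ := hWPD (2*ρ) (by linarith) x
  refine ⟨m₀, fun m hm => ?_⟩
  set B : ℝ := K * (C + 1 + K * m₀ + 2*L + r) with hBdef
  have hm₀0 : (0:ℝ) ≤ (m₀:ℝ) := Nat.cast_nonneg m₀
  have hB0 : (0:ℝ) ≤ B := by positivity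
  -- Key claim: h • g ^ m₀ • x is uniformly close to a bounded-index orbit point
  have key : ∀ h : G, dist x (h • x) ≤ r → dist (g ^ m • x) (h • g ^ m • x) ≤ r →
      ∃ k : ℤ, |(k:ℝ)| ≤ B ∧ dist (g ^ k • x) (h • g ^ m₀ • x) ≤ ρ := by
    intro h hx1 hx2
    rcases eq_or_lt_of_le hm with hEq | hlt
    · -- m₀ = m
      refine ⟨(m₀:ℤ), ?_, ?_⟩
      · rw [Int.cast_natCast, abs_of_nonneg hm₀0]
        have h1 : (m₀:ℝ) ≤ K * (K * (m₀:ℝ)) := by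
          nlinarith [mul_nonneg (by nlinarith : (0:ℝ) ≤ K * K - 1) hm₀0]
        simp only [hBdef]
        nlinarith [mul_nonneg hK0.le hC0, mul_nonneg hK0.le hL,
          mul_nonneg hK0.le hr]
      · rw [zpow_natCast, hEq]
        calc dist (g ^ m • x) (h • g ^ m • x) ≤ r := hx2
          _ ≤ ρ := by simp only [hρdef]; linarith
    · rcases Nat.eq_zero_or_pos m₀ with h0 | hpos
      · subst h0
        refine ⟨0, by simpa using hB0, ?_⟩
        simp only [zpow_zero, pow_zero, one_smul]
        calc dist x (h • x) ≤ r := hx1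
          _ ≤ ρ := by simp only [hρdef]; linarith
      · -- 0 < m₀ < m : the main case, via the Morse property
        have hmR : (0:ℝ) < (m:ℝ) := by
          have : 0 < m := lt_of_le_of_lt (Nat.zero_le m₀) hlt
          exact_mod_cast this
        have hm₀m : (m₀:ℝ) < (m:ℝ) := by exact_mod_cast hlt
        have hm₀R : (0:ℝ) < (m₀:ℝ) := by exact_mod_cast hpos
        set q : ℝ → X := fun t => if t ≤ 0 then x
          else if (m:ℝ) ≤ t then g ^ m • x else h • g ^ (⌊t⌋) • x with hqdef
        have hq0 : q 0 = x := by simp [hqdef]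
        have hqm : q (m:ℝ) = g ^ m • x := by
          simp only [hqdef]
          rw [if_neg (by linarith), if_pos le_rfl]
        have hqm₀ : q (m₀:ℝ) = h • g ^ (m₀:ℤ) • x := by
          simp only [hqdef]
          rw [if_neg (by linarith), if_neg (by linarith), Int.floor_natCast]
        -- pointwise approximation of q by the translated orbit
        have hpt : ∀ s ∈ Set.Icc (0:ℝ) (m:ℝ), ∃ j : ℤ,
            |(j:ℝ) - s| ≤ 1 ∧ dist (q s) (h • g ^ j • x) ≤ r := by
          intro s hs
          by_cases h1 : s ≤ 0
          · have hs0 : s = 0 := le_antisymm h1 hs.1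
            refine ⟨0, by simp [hs0], ?_⟩
            rw [hs0, hq0]
            simpa using hx1
          · by_cases h2 : (m:ℝ) ≤ s
            · have hsm : s = (m:ℝ) := le_antisymm hs.2 h2
              refine ⟨(m:ℤ), by simp [hsm], ?_⟩
              rw [hsm, hqm, zpow_natCast]
              exact hx2
            · refine ⟨⌊s⌋, ?_, ?_⟩
              · rw [abs_le]
                constructor
                · linarith [Int.lt_floor_add_one s]
                · linarith [Int.floor_le s]
              · have : q s = h • g ^ (⌊s⌋) • x := by
                  simp only [hqdef]; rw [if_neg h1, if_neg h2]
                rw [this, dist_self]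
                exact hr
        -- q is a quasi-geodesic
        have hQG : ∀ s ∈ Set.Icc (0:ℝ) (m:ℝ), ∀ t ∈ Set.Icc (0:ℝ) (m:ℝ),
            (1/K) * |s - t| - (L + 2*K + 2*r + 2) ≤ dist (q s) (q t) ∧
            dist (q s) (q t) ≤ K * |s - t| + (L + 2*K + 2*r + 2) := by
          intro s hs t ht
          obtain ⟨js, hjs1, hjs2⟩ := hpt s hs
          obtain ⟨jt, hjt1, hjt2⟩ := hpt t ht
          have hd : dist (h • g ^ js • x) (h • g ^ jt • x)
              = dist (g ^ js • x) (g ^ jt • x) := hiso h _ _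
          obtain ⟨hlo, hhi⟩ := hQI js jt
          have t1 := dist_triangle (q s) (h • g ^ js • x) (q t)
          have t2 := dist_triangle (h • g ^ js • x) (h • g ^ jt • x) (q t)
          have t3 := dist_triangle (h • g ^ js • x) (q s) (q t)
          have t4 := dist_triangle (q s) (q t) (h • g ^ jt • x)
          have t5 := dist_triangle (h • g ^ js • x) (q t) (h • g ^ jt • x)
          have c1 : dist (h • g ^ jt • x) (q t) = dist (q t) (h • g ^ jt • x) :=
            dist_comm _ _
          have c2 : dist (h • g ^ js • x) (q s) = dist (q s) (h • g ^ js • x) :=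
            dist_comm _ _
          have a1 : |(js:ℝ) - jt| ≤ |s - t| + 2 := by
            have b1 := abs_sub_le ((js:ℝ)) s (jt:ℝ)
            have b2 := abs_sub_le s t (jt:ℝ)
            have b3 : |t - (jt:ℝ)| = |(jt:ℝ) - t| := abs_sub_comm _ _
            linarith
          have a2 : |s - t| ≤ |(js:ℝ) - jt| + 2 := by
            have b1 := abs_sub_le s (js:ℝ) t
            have b2 := abs_sub_le ((js:ℝ)) (jt:ℝ) t
            have b3 : |s - (js:ℝ)| = |(js:ℝ) - s| := abs_sub_comm _ _
            have b4 : |(jt:ℝ) - t| ≤ 1 := hjt1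
            linarith
          have h1K : 1/K ≤ 1 := by
            rw [div_le_one hK0]; exact hK
          have h1K0 : (0:ℝ) ≤ 1/K := by positivity
          constructor
          · -- lower bound
            have m1 : (1/K) * |s - t| ≤ (1/K) * (|(js:ℝ) - jt| + 2) :=
              mul_le_mul_of_nonneg_left a2 h1K0
            have m2 : (1/K) * (|(js:ℝ) - jt| + 2)
                = (1/K) * |(js:ℝ) - jt| + (1/K) * 2 := by ring
            have m3 : (1/K) * 2 ≤ 2 := by linarith
            have habs0 : (0:ℝ) ≤ |(js:ℝ) - jt| := abs_nonneg _
            linarith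
          · -- upper bound
            have m1 : K * |(js:ℝ) - jt| ≤ K * (|s - t| + 2) :=
              mul_le_mul_of_nonneg_left a1 hK0.le
            have m2 : K * (|s - t| + 2) = K * |s - t| + 2 * K := by ring
            linarith
        have hmem : (m₀:ℝ) ∈ Set.Icc (0:ℝ) (m:ℝ) := ⟨hm₀0, hm₀m.le⟩
        have hinf := hC₀ q 0 (m:ℝ) hmR.le
          ⟨0, by rw [hq0, zpow_zero, one_smul]⟩
          ⟨(m:ℤ), by rw [hqm, zpow_natCast]⟩ hQG (m₀:ℝ) hmem
        have hne : (Set.range fun k : ℤ => g ^ k • x).Nonempty :=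
          ⟨g ^ (0:ℤ) • x, 0, rfl⟩
        have hlt' : Metric.infDist (q (m₀:ℝ)) (Set.range fun k : ℤ => g ^ k • x)
            < C + 1 := lt_of_le_of_lt (hinf.trans hC₀C) (by linarith)
        obtain ⟨y, ⟨k, rfl⟩, hy⟩ := (Metric.infDist_lt_iff hne).mp hlt'
        rw [hqm₀] at hy
        have hykey : dist (h • g ^ (m₀:ℤ) • x) (g ^ k • x) ≤ C + 1 := hy.le
        refine ⟨k, ?_, ?_⟩
        · -- |k| ≤ B
          have e1 : dist (h • g ^ (m₀:ℤ) • x) (h • x) = dist (g ^ (m₀:ℤ) • x) x := by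
            have := hiso h (g ^ (m₀:ℤ) • x) x
            exact this
          have e2 : dist (g ^ (m₀:ℤ) • x) x ≤ K * (m₀:ℝ) + L := by
            have := (hQI (m₀:ℤ) 0).2
            simpa [abs_of_nonneg hm₀0] using this
          have e3 : dist (h • x) x ≤ r := by rw [dist_comm]; exact hx1
          have e4 : dist (g ^ k • x) x ≤ (C + 1) + (K * (m₀:ℝ) + L) + r := by
            have tA := dist_triangle (g ^ k • x) (h • g ^ (m₀:ℤ) • x) x
            have tB := dist_triangle (h • g ^ (m₀:ℤ) • x) (h • x) x
            have cA : dist (g ^ k • x) (h • g ^ (m₀:ℤ) • x)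
                = dist (h • g ^ (m₀:ℤ) • x) (g ^ k • x) := dist_comm _ _
            linarith
          have e5 : (1/K) * |(k:ℝ)| - L ≤ dist (g ^ k • x) x := by
            have := (hQI k 0).1
            simpa using this
          have e6 : (1/K) * |(k:ℝ)| ≤ C + 1 + K * (m₀:ℝ) + 2*L + r := by linarith
          have e7 : K * ((1/K) * |(k:ℝ)|) = |(k:ℝ)| := by
            field_simp
          have e8 : K * ((1/K) * |(k:ℝ)|)
              ≤ K * (C + 1 + K * (m₀:ℝ) + 2*L + r) :=
            mul_le_mul_of_nonneg_left e6 hK0.le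
          rw [e7] at e8
          exact e8
        · rw [dist_comm]
          have : h • g ^ (m₀:ℤ) • x = h • g ^ m₀ • x := by rw [zpow_natCast]
          rw [this] at hykey
          calc dist (h • g ^ m₀ • x) (g ^ k • x) ≤ C + 1 := hykey
            _ ≤ ρ := by simp only [hρdef]; linarith
  -- Assemble: the set is covered by finitely many translates of the WPD set
  have hsub : {h : G | dist x (h • x) ≤ r ∧
      dist (g ^ m • x) (h • (g ^ m • x)) ≤ r} ⊆
      ⋃ k ∈ Finset.Icc (-⌈B⌉) ⌈B⌉, {h : G | dist x (h • x) ≤ r ∧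
        dist (g ^ (k:ℤ) • x) (h • g ^ m₀ • x) ≤ ρ} := by
    intro h hh
    obtain ⟨k, hk1, hk2⟩ := key h hh.1 hh.2
    have hceil : B ≤ (⌈B⌉:ℝ) := Int.le_ceil B
    obtain ⟨hk1a, hk1b⟩ := abs_le.mp hk1
    refine Set.mem_biUnion (Finset.mem_Icc.mpr ⟨?_, ?_⟩) ⟨hh.1, hk2⟩
    · exact_mod_cast (by linarith : -(⌈B⌉:ℝ) ≤ (k:ℝ))
    · exact_mod_cast (by linarith : (k:ℝ) ≤ (⌈B⌉:ℝ))
  refine Set.Finite.subset ?_ hsub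
  refine Set.Finite.biUnion (Finset.finite_toSet _) ?_
  intro k _
  rcases Set.eq_empty_or_nonempty {h : G | dist x (h • x) ≤ r ∧
      dist (g ^ (k:ℤ) • x) (h • g ^ m₀ • x) ≤ ρ} with he | ⟨h₀, hh₀⟩
  · rw [he]; exact Set.finite_empty
  · refine Set.Finite.subset (hU.image (fun u => h₀ * u)) ?_
    intro h hh
    simp only [Set.mem_setOf_eq] at hh hh₀
    refine ⟨h₀⁻¹ * h, ⟨?_, ?_⟩, mul_inv_cancel_left h₀ h⟩
    · show dist x ((h₀⁻¹ * h) • x) ≤ 2*ρ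
      have e1 : dist x ((h₀⁻¹ * h) • x) = dist (h₀ • x) (h • x) := by
        rw [← hiso h₀ x ((h₀⁻¹ * h) • x), smul_smul, mul_inv_cancel_left]
      rw [e1]
      have tA := dist_triangle (h₀ • x) x (h • x)
      have cA : dist (h₀ • x) x = dist x (h₀ • x) := dist_comm _ _
      have hrρ : r ≤ ρ := by simp only [hρdef]; linarith
      linarith [hh₀.1, hh.1]
    · show dist (g ^ m₀ • x) ((h₀⁻¹ * h) • (g ^ m₀ • x)) ≤ 2*ρ
      have e1 : dist (g ^ m₀ • x) ((h₀⁻¹ * h) • (g ^ m₀ • x))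
          = dist (h₀ • g ^ m₀ • x) (h • g ^ m₀ • x) := by
        rw [← hiso h₀ (g ^ m₀ • x) ((h₀⁻¹ * h) • (g ^ m₀ • x)),
          smul_smul h₀ (h₀⁻¹ * h), mul_inv_cancel_left]
      rw [e1]
      have tA := dist_triangle (h₀ • g ^ m₀ • x) (g ^ (k:ℤ) • x) (h • g ^ m₀ • x)
      have cA : dist (h₀ • g ^ m₀ • x) (g ^ (k:ℤ) • x)
          = dist (g ^ (k:ℤ) • x) (h₀ • g ^ m₀ • x) := dist_comm _ _
      linarith [hh₀.2, hh.2]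
end

section
/- The suspension of the simplicial real line (the triangle complex obtained by suspending ℝ with its standard simplicial structure, with two apices n and s) does not satisfy any isoperimetric inequality: for every n ∈ ℕ there is an embedded loop of length 4 (a geodesic bigon between the two apices) requiring at least n triangles to fill. -/
open SimpleGraph

/-- An elementary triangle move between walks from `a` to `b`. -/
def ElemTri {V : Type*} [DecidableEq V] (Γ : SimpleGraph V) (T : Set (Finset V)) {a b : V}
    (p q : Γ.Walk a b) : Prop :=
  ∃ (v : V) (h₁ : Γ.Adj a v) (h₂ : Γ.Adj v b) (h₃ : Γ.Adj a b),
    ({a, v, b} : Finset V) ∈ T ∧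
    ((p = Walk.cons h₁ (Walk.cons h₂ Walk.nil) ∧ q = Walk.cons h₃ Walk.nil) ∨
     (q = Walk.cons h₁ (Walk.cons h₂ Walk.nil) ∧ p = Walk.cons h₃ Walk.nil))

/-- A free (backtrack) move between walks from `a` to `b`. -/
def ElemBack {V : Type*} (Γ : SimpleGraph V) {a b : V} (p q : Γ.Walk a b) : Prop :=
  (∃ (v : V) (h : Γ.Adj a v) (q' : Γ.Walk a b),
      p = Walk.cons h (Walk.cons h.symm q') ∧ q = q') ∨
  (∃ (v : V) (h : Γ.Adj a v) (p' : Γ.Walk a b),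
      q = Walk.cons h (Walk.cons h.symm p') ∧ p = p')

/-- One step of combinatorial homotopy across `n` triangles, inside a walk. -/
def HomotopyStep {V : Type*} [DecidableEq V] (Γ : SimpleGraph V) (T : Set (Finset V)) (n : ℕ)
    {x y : V} (p q : Γ.Walk x y) : Prop :=
  ∃ (a b : V) (r : Γ.Walk x a) (s : Γ.Walk b y) (p₁ q₁ : Γ.Walk a b),
    p = r.append (p₁.append s) ∧ q = r.append (q₁.append s) ∧
    ((n = 1 ∧ ElemTri Γ T p₁ q₁) ∨ (n = 0 ∧ ElemBack Γ p₁ q₁))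

/-- `FillRel Γ T p q n`: `p` can be transformed into `q` by a combinatorial
homotopy of area `n`. -/
inductive FillRel {V : Type*} [DecidableEq V] (Γ : SimpleGraph V) (T : Set (Finset V)) :
    ∀ {x y : V}, Γ.Walk x y → Γ.Walk x y → ℕ → Prop
  | refl {x y : V} (p : Γ.Walk x y) : FillRel Γ T p p 0
  | step {x y : V} {p q r : Γ.Walk x y} {m n : ℕ} :
      HomotopyStep Γ T m p q → FillRel Γ T q r n → FillRel Γ T p r (m + n)

/-- The 1-skeleton of the suspension of the simplicial real line:
vertices are `ℤ` (the line) together with two apices `Sum.inr true` (north) and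
`Sum.inr false` (south); each apex is joined to every vertex of the line. -/
def suspLine : SimpleGraph (ℤ ⊕ Bool) where
  Adj x y :=
    match x, y with
    | Sum.inl k, Sum.inl l => k = l + 1 ∨ l = k + 1
    | Sum.inl _, Sum.inr _ => True
    | Sum.inr _, Sum.inl _ => True
    | Sum.inr _, Sum.inr _ => False
  symm := by
    refine ⟨fun x y h => ?_⟩
    cases x <;> cases y <;> simp_all <;> tauto
  loopless := by
    refine ⟨fun x h => ?_⟩
    cases x with
    | inl k => rcases h with h | h <;> omega
    | inr e => exact h

/-- The triangles of the suspension of the simplicial line. -/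
def suspLineTriangles : Set (Finset (ℤ ⊕ Bool)) :=
  {t | ∃ (e : Bool) (k : ℤ),
    t = {Sum.inr e, Sum.inl k, Sum.inl (k + 1)}}
/-- Antisymmetric edge weight on the suspension of the line. -/
def susC : (ℤ ⊕ Bool) → (ℤ ⊕ Bool) → ℤ
  | Sum.inr true, Sum.inl k => -k
  | Sum.inl k, Sum.inr true => k
  | Sum.inr false, Sum.inl k => k
  | Sum.inl k, Sum.inr false => -k
  | _, _ => 0

lemma susC_symm (x y : ℤ ⊕ Bool) : susC x y = - susC y x := by
  rcases x with k | (_|_) <;> rcases y with l | (_|_) <;> simp [susC]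

/-- Total weight of a walk. -/
def phiW {a b : ℤ ⊕ Bool} (p : suspLine.Walk a b) : ℤ :=
  (p.darts.map fun d => susC d.toProd.1 d.toProd.2).sum

@[simp] lemma phiW_nil {a : ℤ ⊕ Bool} : phiW (Walk.nil : suspLine.Walk a a) = 0 := rfl

@[simp] lemma phiW_cons {a b c : ℤ ⊕ Bool} (h : suspLine.Adj a b) (p : suspLine.Walk b c) :
    phiW (Walk.cons h p) = susC a b + phiW p := rfl

@[simp] lemma phiW_append {a b c : ℤ ⊕ Bool} (p : suspLine.Walk a b) (q : suspLine.Walk b c) :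
    phiW (p.append q) = phiW p + phiW q := by
  simp [phiW, Walk.darts_append]

lemma phiW_back {a b : ℤ ⊕ Bool} {p q : suspLine.Walk a b}
    (h : ElemBack suspLine p q) : phiW p = phiW q := by
  rcases h with ⟨v, h, q', rfl, rfl⟩ | ⟨v, h, p', rfl, rfl⟩ <;>
    simp [susC_symm a v]

lemma tri_sum {e : Bool} {k : ℤ} {a v b : ℤ ⊕ Bool}
    (hav : a ≠ v) (hvb : v ≠ b) (hab : a ≠ b)
    (ht : ({a, v, b} : Finset (ℤ ⊕ Bool)) = {Sum.inr e, Sum.inl k, Sum.inl (k+1)}) :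
    susC a v + susC v b - susC a b = 1 ∨ susC a v + susC v b - susC a b = -1 := by
  have ha : a = Sum.inr e ∨ a = Sum.inl k ∨ a = Sum.inl (k+1) := by
    have : a ∈ ({Sum.inr e, Sum.inl k, Sum.inl (k+1)} : Finset (ℤ ⊕ Bool)) := by
      rw [← ht]; simp
    simpa using this
  have hv : v = Sum.inr e ∨ v = Sum.inl k ∨ v = Sum.inl (k+1) := by
    have : v ∈ ({Sum.inr e, Sum.inl k, Sum.inl (k+1)} : Finset (ℤ ⊕ Bool)) := by
      rw [← ht]; simp
    simpa using this
  have hb : b = Sum.inr e ∨ b = Sum.inl k ∨ b = Sum.inl (k+1) := by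
    have : b ∈ ({Sum.inr e, Sum.inl k, Sum.inl (k+1)} : Finset (ℤ ⊕ Bool)) := by
      rw [← ht]; simp
    simpa using this
  rcases e <;> rcases ha with rfl | rfl | rfl <;> rcases hv with rfl | rfl | rfl <;>
    rcases hb with rfl | rfl | rfl <;> simp_all [susC] <;> omega

lemma phiW_tri {a b : ℤ ⊕ Bool} {p q : suspLine.Walk a b}
    (h : ElemTri suspLine suspLineTriangles p q) : |phiW p - phiW q| ≤ 1 := by
  obtain ⟨v, h₁, h₂, h₃, hmem, hcase⟩ := h
  obtain ⟨e, k, hek⟩ := hmem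
  have hav : a ≠ v := h₁.ne
  have hvb : v ≠ b := h₂.ne
  have hab : a ≠ b := h₃.ne
  have := tri_sum hav hvb hab hek
  rcases hcase with ⟨rfl, rfl⟩ | ⟨rfl, rfl⟩ <;> simp only [phiW_cons, phiW_nil] <;>
    rcases this with h | h <;> rw [abs_le] <;> omega

lemma phiW_step {x y : ℤ ⊕ Bool} {p q : suspLine.Walk x y} {n : ℕ}
    (h : HomotopyStep suspLine suspLineTriangles n p q) : |phiW p - phiW q| ≤ n := by
  obtain ⟨a, b, r, s, p₁, q₁, rfl, rfl, hc⟩ := h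
  have : phiW (r.append (p₁.append s)) - phiW (r.append (q₁.append s)) = phiW p₁ - phiW q₁ := by
    simp only [phiW_append]; ring
  rw [this]
  rcases hc with ⟨rfl, ht⟩ | ⟨rfl, hb⟩
  · simpa using phiW_tri ht
  · simp [phiW_back hb]

lemma phiW_fill {x y : ℤ ⊕ Bool} {p q : suspLine.Walk x y} {m : ℕ}
    (h : FillRel suspLine suspLineTriangles p q m) : |phiW p - phiW q| ≤ m := by
  induction h with
  | refl p => simp
  | @step p q2 r m n hs hf ih =>
    calc |phiW p - phiW r| ≤ |phiW p - phiW q2| + |phiW q2 - phiW r| := abs_sub_le _ _ _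
    _ ≤ (m : ℤ) + (n : ℤ) := add_le_add (phiW_step hs) ih
    _ = ((m + n : ℕ) : ℤ) := by push_cast; ring

/-- The suspension of the simplicial real line satisfies no isoperimetric
inequality: for every `n` there is an embedded loop of length `4` (a geodesic
bigon between the two apices) requiring at least `n` triangles to fill. -/
theorem suspension_no_isoperimetric_inequality :
    ∀ n : ℕ, ∃ (x : ℤ ⊕ Bool) (p : suspLine.Walk x x),
      p.IsCycle ∧ p.length = 4 ∧
      ∀ m : ℕ, FillRel suspLine suspLineTriangles p Walk.nil m → n ≤ m := by
  intro n
  set K : ℤ := (n : ℤ) + 1 with hK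
  have h1 : suspLine.Adj (Sum.inr true) (Sum.inl 0) := trivial
  have h2 : suspLine.Adj (Sum.inl 0) (Sum.inr false) := trivial
  have h3 : suspLine.Adj (Sum.inr false) (Sum.inl K) := trivial
  have h4 : suspLine.Adj (Sum.inl K) (Sum.inr true) := trivial
  refine ⟨Sum.inr true, Walk.cons h1 (Walk.cons h2 (Walk.cons h3 (Walk.cons h4 Walk.nil))),
    ?_, by simp, ?_⟩
  · rw [Walk.isCycle_def]
    refine ⟨?_, by simp, ?_⟩
    · rw [Walk.isTrail_def]
      simp [Sym2.eq, Sym2.rel_iff']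
      omega
    · simp
      omega
  · intro m hfill
    have hb := phiW_fill hfill
    have hphi : phiW (Walk.cons h1 (Walk.cons h2 (Walk.cons h3 (Walk.cons h4 Walk.nil)))) =
        2 * K := by
      simp [susC]; ring
    rw [hphi] at hb
    simp at hb
    rw [abs_of_pos (by omega : (0:ℤ) < K)] at hb
    omega
end

section
/- Let T be a simplicial tree and G a group acting on T. Suppose e and e' are distinct edges of T such that the pointwise stabilizer of {e, e'} in G is finite, and suppose g ∈ G is a hyperbolic isometry whose axis contains both e and e'. Then for any vertex v on the segment between e and e', the common stabilizer of v and gᵐv is finite for all sufficiently large m. -/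
open SimpleGraph

/-- In a tree, a vertex lying between `u` and `w` at a given distance from `u`
is unique. -/
lemma tree_between {V : Type*} {Γ : SimpleGraph V} (hT : Γ.IsTree) {u w x y : V}
    (hx : Γ.dist u x + Γ.dist x w = Γ.dist u w)
    (hy : Γ.dist u y + Γ.dist y w = Γ.dist u w)
    (hxy : Γ.dist u x = Γ.dist u y) : x = y := by
  obtain ⟨p1, hp1⟩ := (hT.isConnected u x).exists_walk_length_eq_dist
  obtain ⟨q1, hq1⟩ := (hT.isConnected x w).exists_walk_length_eq_dist
  obtain ⟨p2, hp2⟩ := (hT.isConnected u y).exists_walk_length_eq_dist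
  obtain ⟨q2, hq2⟩ := (hT.isConnected y w).exists_walk_length_eq_dist
  have hr1 : (p1.append q1).length = Γ.dist u w := by
    rw [Walk.length_append, hp1, hq1, hx]
  have hr2 : (p2.append q2).length = Γ.dist u w := by
    rw [Walk.length_append, hp2, hq2, hy]
  have hP1 := (p1.append q1).isPath_of_length_eq_dist hr1
  have hP2 := (p2.append q2).isPath_of_length_eq_dist hr2
  have := hT.IsAcyclic.path_unique ⟨p1.append q1, hP1⟩ ⟨p2.append q2, hP2⟩
  have hww : p1.append q1 = p2.append q2 := congrArg Subtype.val this
  have h1 : (p1.append q1).getVert p1.length = x := by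
    rw [Walk.getVert_append]
    simp [Walk.getVert_zero]
  have h2 : (p2.append q2).getVert p2.length = y := by
    rw [Walk.getVert_append]
    simp [Walk.getVert_zero]
  have hlen : p1.length = p2.length := by rw [hp1, hp2, hxy]
  rw [← h1, ← h2, hww, hlen]

/-- Let a group `G` act on a simplicial tree `Γ` by automorphisms. If `g` is a
hyperbolic isometry whose axis `L` (on which `g` translates by `t > 0`) contains
two distinct edges `e = (L a, L (a+1))` and `e' = (L b, L (b+1))` whose common
pointwise stabiliser is finite, then for any vertex `v = L j` on the segment
between `e` and `e'`, the common stabiliser of `v` and `gᵐ v` is finite for all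
sufficiently large `m`. -/
theorem tree_weak_wpd {V G : Type*} [Group G] (Γ : SimpleGraph V)
    (hT : Γ.IsTree) [MulAction G V]
    (hact : ∀ (k : G) (u w : V), Γ.Adj u w → Γ.Adj (k • u) (k • w))
    (g : G) (L : ℤ → V)
    (hline : ∀ i j : ℤ, Γ.dist (L i) (L j) = (i - j).natAbs)
    (t : ℤ) (ht : 0 < t)
    (htrans : ∀ i : ℤ, g • L i = L (i + t))
    (a b : ℤ) (hab : a ≠ b)
    (hedges : Γ.Adj (L a) (L (a + 1)) ∧ Γ.Adj (L b) (L (b + 1)))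
    (hstab : {k : G | k • L a = L a ∧ k • L (a + 1) = L (a + 1) ∧
      k • L b = L b ∧ k • L (b + 1) = L (b + 1)}.Finite)
    (j : ℤ) (hj : min a b ≤ j ∧ j ≤ max a b + 1) :
    ∃ M : ℕ, ∀ m : ℕ, M ≤ m →
      {k : G | k • L j = L j ∧ k • (g ^ m • L j) = g ^ m • L j}.Finite := by
  -- the action preserves distances
  have hle : ∀ (k : G) (u w : V), Γ.dist (k • u) (k • w) ≤ Γ.dist u w := by
    intro k u w
    obtain ⟨p, hp⟩ := (hT.isConnected u w).exists_walk_length_eq_dist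
    have := Γ.dist_le (p.map (⟨fun x => k • x, fun h => hact k _ _ h⟩ : Γ →g Γ))
    rwa [Walk.length_map, hp] at this
  have hdist : ∀ (k : G) (u w : V), Γ.dist (k • u) (k • w) = Γ.dist u w := by
    intro k u w
    refine le_antisymm (hle k u w) ?_
    have := hle k⁻¹ (k • u) (k • w)
    simpa using this
  -- translation powers
  have hpow : ∀ (n : ℕ) (i : ℤ), g ^ n • L i = L (i + n * t) := by
    intro n
    induction n with
    | zero => simp
    | succ n ih =>
      intro i
      rw [pow_succ, mul_smul, htrans, ih]
      congr 1
      push_cast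
      ring
  have hpowinv : ∀ (n : ℕ) (i : ℤ), (g ^ n)⁻¹ • L i = L (i - n * t) := by
    intro n i
    rw [inv_smul_eq_iff, hpow]
    congr 1
    ring
  -- an element fixing two points of the line fixes everything in between
  have hfix : ∀ (k : G) (p q : ℤ), p ≤ q → k • L p = L p → k • L q = L q →
      ∀ i, p ≤ i → i ≤ q → k • L i = L i := by
    intro k p q hpq hkp hkq i hpi hiq
    refine tree_between hT (u := L p) (w := L q) ?_ ?_ ?_
    · have e1 : Γ.dist (L p) (k • L i) = Γ.dist (L p) (L i) := by
        conv_lhs => rw [← hkp]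
        rw [hdist]
      have e2 : Γ.dist (k • L i) (L q) = Γ.dist (L i) (L q) := by
        conv_lhs => rw [← hkq]
        rw [hdist]
      rw [e1, e2, hline, hline, hline]
      omega
    · rw [hline, hline, hline]; omega
    · conv_lhs => rw [← hkp]
      rw [hdist]
  -- choose constants
  set n : ℕ := (j - min a b).toNat with hn
  have hnt : j - (n : ℤ) * t ≤ min a b := by
    have h1 : j - min a b ≤ (n : ℤ) := Int.self_le_toNat _
    have h2 : (n : ℤ) * 1 ≤ (n : ℤ) * t := by
      exact mul_le_mul_of_nonneg_left ht (Int.natCast_nonneg n)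
    omega
  refine ⟨(max a b + 1 - j + n * t).toNat, ?_⟩
  intro m hm
  have hmt : max a b + 1 ≤ j - (n : ℤ) * t + (m : ℤ) * t := by
    have h1 : max a b + 1 - j + n * t ≤ ((max a b + 1 - j + n * t).toNat : ℤ) :=
      Int.self_le_toNat _
    have h2 : ((max a b + 1 - j + n * t).toNat : ℤ) ≤ (m : ℤ) := by
      exact_mod_cast hm
    have h3 : (m : ℤ) * 1 ≤ (m : ℤ) * t := by
      exact mul_le_mul_of_nonneg_left ht (Int.natCast_nonneg m)
    omega
  -- the conjugation map
  refine Set.Finite.subset (hstab.image (fun h => g ^ n * h * (g ^ n)⁻¹)) ?_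
  rintro k ⟨hk1, hk2⟩
  rw [hpow m j] at hk2
  set h : G := (g ^ n)⁻¹ * k * g ^ n with hh
  have keyh : ∀ i : ℤ, k • L (i + n * t) = L (i + n * t) → h • L i = L i := by
    intro i hki
    rw [hh, mul_smul, mul_smul, hpow, hki, hpowinv]
    congr 1
    ring
  have hfix1 : h • L (j - n * t) = L (j - n * t) := by
    apply keyh
    rw [sub_add_cancel]
    exact hk1
  have hfix2 : h • L (j - n * t + m * t) = L (j - n * t + m * t) := by
    apply keyh
    have : j - (n : ℤ) * t + (m : ℤ) * t + (n : ℤ) * t = j + m * t := by ring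
    rw [this]
    exact hk2
  have hlo : j - (n : ℤ) * t ≤ j - (n : ℤ) * t + (m : ℤ) * t := by
    have h3 : 0 ≤ (m : ℤ) * t := mul_nonneg (Int.natCast_nonneg m) ht.le
    omega
  have hall : ∀ i, j - (n : ℤ) * t ≤ i → i ≤ j - (n : ℤ) * t + (m : ℤ) * t →
      h • L i = L i := fun i h1 h2 => hfix h _ _ hlo hfix1 hfix2 i h1 h2
  refine ⟨h, ⟨?_, ?_, ?_, ?_⟩, ?_⟩
  · exact hall a (by omega) (by omega)
  · exact hall (a + 1) (by omega) (by omega)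
  · exact hall b (by omega) (by omega)
  · exact hall (b + 1) (by omega) (by omega)
  · rw [hh]
    group
end
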